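/- For every pLTL(F,X) formula φ with d ≥ 1 parameter variables and finite Markov chain M with m states, setting N := m·|φ|, the set min V_{>0}(φ) of minimal elements of V_{>0}(φ) with respect to pointwise ≤ on ℕ^Var is an antichain contained in {0,…,N}^d, and its cardinality is at most (N·d)^{d−1}. -/

import Mathlib

open MeasureTheory
open scoped ENNReal

/-- Syntax of the fragment pLTL(F,X):
φ ::= a | ¬a | φ∧φ | φ∨φ | ○φ | ◇φ | ◇_{≤x}φ | ◇_{≤c}φ. -/
inductive FX (AP Var : Type) : Type
  | atom : AP → FX AP Var
  | natom : AP → FX AP Var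
  | and : FX AP Var → FX AP Var → FX AP Var
  | or : FX AP Var → FX AP Var → FX AP Var
  | next : FX AP Var → FX AP Var
  | ev : FX AP Var → FX AP Var
  | evVar : Var → FX AP Var → FX AP Var
  | evConst : ℕ → FX AP Var → FX AP Var

/-- The size `|φ|` of a formula: the number of subformula occurrences. -/
def FX.size {AP Var : Type} : FX AP Var → ℕ
  | atom _ => 1
  | natom _ => 1
  | and φ ψ => FX.size φ + FX.size ψ + 1
  | or φ ψ => FX.size φ + FX.size ψ + 1
  | next φ => FX.size φ + 1
  | ev φ => FX.size φ + 1
  | evVar _ φ => FX.size φ + 1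
  | evConst _ φ => FX.size φ + 1

/-- Satisfaction relation `(w,i,v) ⊨ φ` for pLTL(F,X). -/
def FX.Sat {AP Var : Type} (w : ℕ → Set AP) : ℕ → (Var → ℕ) → FX AP Var → Prop
  | i, _, atom a => a ∈ w i
  | i, _, natom a => a ∉ w i
  | i, v, and φ ψ => FX.Sat w i v φ ∧ FX.Sat w i v ψ
  | i, v, or φ ψ => FX.Sat w i v φ ∨ FX.Sat w i v ψ
  | i, v, next φ => FX.Sat w (i + 1) v φ
  | i, v, ev φ => ∃ j, i ≤ j ∧ FX.Sat w j v φ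
  | i, v, evVar x φ => ∃ j, i ≤ j ∧ j ≤ v x + i ∧ FX.Sat w j v φ
  | i, v, evConst c φ => ∃ j, i ≤ j ∧ j ≤ c + i ∧ FX.Sat w j v φ

namespace FXAux

variable {AP Var : Type}

/-- Witnessed satisfaction: like `FX.Sat` on `w`, but every evaluation position and every
chosen witness position must lie in the finite set `W`. -/
def SatW (w : ℕ → Set AP) (v : Var → ℕ) (W : Finset ℕ) : ℕ → FX AP Var → Prop
  | i, .atom a => i ∈ W ∧ a ∈ w i
  | i, .natom a => i ∈ W ∧ a ∉ w i
  | i, .and φ ψ => i ∈ W ∧ SatW w v W i φ ∧ SatW w v W i ψ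
  | i, .or φ ψ => i ∈ W ∧ (SatW w v W i φ ∨ SatW w v W i ψ)
  | i, .next φ => i ∈ W ∧ SatW w v W (i + 1) φ
  | i, .ev φ => i ∈ W ∧ ∃ j, i ≤ j ∧ SatW w v W j φ
  | i, .evVar x φ => i ∈ W ∧ ∃ j, i ≤ j ∧ j ≤ v x + i ∧ SatW w v W j φ
  | i, .evConst c φ => i ∈ W ∧ ∃ j, i ≤ j ∧ j ≤ c + i ∧ SatW w v W j φ

lemma SatW_mem {w : ℕ → Set AP} {v : Var → ℕ} {W : Finset ℕ} {i : ℕ} {φ : FX AP Var}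
    (h : SatW w v W i φ) : i ∈ W := by
  cases φ <;> exact h.1

lemma SatW_mono {w : ℕ → Set AP} {v : Var → ℕ} {W W' : Finset ℕ} (hWW : W ⊆ W')
    {φ : FX AP Var} : ∀ {i : ℕ}, SatW w v W i φ → SatW w v W' i φ := by
  induction φ with
  | atom a => exact fun h => ⟨hWW h.1, h.2⟩
  | natom a => exact fun h => ⟨hWW h.1, h.2⟩
  | and φ ψ ih1 ih2 => exact fun h => ⟨hWW h.1, ih1 h.2.1, ih2 h.2.2⟩
  | or φ ψ ih1 ih2 => exact fun h => ⟨hWW h.1, h.2.elim (fun h' => Or.inl (ih1 h')) (fun h' => Or.inr (ih2 h'))⟩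
  | next φ ih => exact fun h => ⟨hWW h.1, ih h.2⟩
  | ev φ ih => exact fun h => ⟨hWW h.1, h.2.imp fun j hj => ⟨hj.1, ih hj.2⟩⟩
  | evVar x φ ih => exact fun h => ⟨hWW h.1, h.2.imp fun j hj => ⟨hj.1, hj.2.1, ih hj.2.2⟩⟩
  | evConst c φ ih => exact fun h => ⟨hWW h.1, h.2.imp fun j hj => ⟨hj.1, hj.2.1, ih hj.2.2⟩⟩

lemma sat_extract {w : ℕ → Set AP} {v : Var → ℕ} {φ : FX AP Var} :
    ∀ {i : ℕ}, FX.Sat w i v φ → ∃ W : Finset ℕ, SatW w v W i φ ∧ W.card ≤ φ.size := by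
  induction φ with
  | atom a =>
    intro i h
    exact ⟨{i}, ⟨Finset.mem_singleton_self i, h⟩, by simp [FX.size]⟩
  | natom a =>
    intro i h
    exact ⟨{i}, ⟨Finset.mem_singleton_self i, h⟩, by simp [FX.size]⟩
  | and φ ψ ih1 ih2 =>
    intro i h
    obtain ⟨W1, h1, hc1⟩ := ih1 h.1
    obtain ⟨W2, h2, hc2⟩ := ih2 h.2
    refine ⟨insert i (W1 ∪ W2), ⟨Finset.mem_insert_self _ _, ?_, ?_⟩, ?_⟩
    · exact SatW_mono (fun j hj => Finset.mem_insert_of_mem (Finset.mem_union_left _ hj)) h1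
    · exact SatW_mono (fun j hj => Finset.mem_insert_of_mem (Finset.mem_union_right _ hj)) h2
    · calc (insert i (W1 ∪ W2)).card ≤ (W1 ∪ W2).card + 1 := Finset.card_insert_le _ _
        _ ≤ (W1.card + W2.card) + 1 := by
            exact Nat.add_le_add_right (Finset.card_union_le _ _) 1
        _ ≤ φ.size + ψ.size + 1 := by omega
  | or φ ψ ih1 ih2 =>
    intro i h
    rcases h with h | h
    · obtain ⟨W1, h1, hc1⟩ := ih1 h
      refine ⟨insert i W1, ⟨Finset.mem_insert_self _ _, Or.inl (SatW_mono (Finset.subset_insert _ _) h1)⟩, ?_⟩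
      calc (insert i W1).card ≤ W1.card + 1 := Finset.card_insert_le _ _
        _ ≤ φ.size + ψ.size + 1 := by simp [FX.size] at *; omega
    · obtain ⟨W2, h2, hc2⟩ := ih2 h
      refine ⟨insert i W2, ⟨Finset.mem_insert_self _ _, Or.inr (SatW_mono (Finset.subset_insert _ _) h2)⟩, ?_⟩
      calc (insert i W2).card ≤ W2.card + 1 := Finset.card_insert_le _ _
        _ ≤ φ.size + ψ.size + 1 := by simp [FX.size] at *; omega
  | next φ ih =>
    intro i h
    obtain ⟨W1, h1, hc1⟩ := ih h
    refine ⟨insert i W1, ⟨Finset.mem_insert_self _ _, SatW_mono (Finset.subset_insert _ _) h1⟩, ?_⟩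
    calc (insert i W1).card ≤ W1.card + 1 := Finset.card_insert_le _ _
      _ ≤ φ.size + 1 := by omega
  | ev φ ih =>
    intro i h
    obtain ⟨j, hij, hj⟩ := h
    obtain ⟨W1, h1, hc1⟩ := ih hj
    refine ⟨insert i W1, ⟨Finset.mem_insert_self _ _, j, hij, SatW_mono (Finset.subset_insert _ _) h1⟩, ?_⟩
    calc (insert i W1).card ≤ W1.card + 1 := Finset.card_insert_le _ _
      _ ≤ φ.size + 1 := by omega
  | evVar x φ ih =>
    intro i h
    obtain ⟨j, hij, hji, hj⟩ := h
    obtain ⟨W1, h1, hc1⟩ := ih hj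
    refine ⟨insert i W1, ⟨Finset.mem_insert_self _ _, j, hij, hji, SatW_mono (Finset.subset_insert _ _) h1⟩, ?_⟩
    calc (insert i W1).card ≤ W1.card + 1 := Finset.card_insert_le _ _
      _ ≤ φ.size + 1 := by omega
  | evConst c φ ih =>
    intro i h
    obtain ⟨j, hij, hji, hj⟩ := h
    obtain ⟨W1, h1, hc1⟩ := ih hj
    refine ⟨insert i W1, ⟨Finset.mem_insert_self _ _, j, hij, hji, SatW_mono (Finset.subset_insert _ _) h1⟩, ?_⟩
    calc (insert i W1).card ≤ W1.card + 1 := Finset.card_insert_le _ _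
      _ ≤ φ.size + 1 := by omega

/-- Transport of witnessed satisfaction along a reindexing map `g`. -/
lemma SatW_shift {w w' : ℕ → Set AP} {v : Var → ℕ} {W : Finset ℕ} (g : ℕ → ℕ)
    (h1 : ∀ j ∈ W, w' (g j) = w j)
    (h2 : ∀ p ∈ W, ∀ q ∈ W, p ≤ q → g p ≤ g q ∧ g q ≤ g p + (q - p))
    (h3 : ∀ i, i ∈ W → (i + 1) ∈ W → g (i + 1) = g i + 1)
    {φ : FX AP Var} :
    ∀ {i : ℕ}, SatW w v W i φ → SatW w' v (W.image g) (g i) φ := by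
  induction φ with
  | atom a =>
    intro i h
    exact ⟨Finset.mem_image_of_mem g h.1, by rw [h1 i h.1]; exact h.2⟩
  | natom a =>
    intro i h
    exact ⟨Finset.mem_image_of_mem g h.1, by rw [h1 i h.1]; exact h.2⟩
  | and φ ψ ih1 ih2 =>
    intro i h
    exact ⟨Finset.mem_image_of_mem g h.1, ih1 h.2.1, ih2 h.2.2⟩
  | or φ ψ ih1 ih2 =>
    intro i h
    exact ⟨Finset.mem_image_of_mem g h.1, h.2.elim (fun h' => Or.inl (ih1 h')) (fun h' => Or.inr (ih2 h'))⟩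
  | next φ ih =>
    intro i h
    refine ⟨Finset.mem_image_of_mem g h.1, ?_⟩
    have := ih h.2
    rwa [h3 i h.1 (SatW_mem h.2)] at this
  | ev φ ih =>
    intro i h
    obtain ⟨j, hij, hj⟩ := h.2
    exact ⟨Finset.mem_image_of_mem g h.1, g j, (h2 i h.1 j (SatW_mem hj) hij).1, ih hj⟩
  | evVar x φ ih =>
    intro i h
    obtain ⟨j, hij, hji, hj⟩ := h.2
    have hm := h2 i h.1 j (SatW_mem hj) hij
    exact ⟨Finset.mem_image_of_mem g h.1, g j, hm.1, by omega, ih hj⟩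
  | evConst c φ ih =>
    intro i h
    obtain ⟨j, hij, hji, hj⟩ := h.2
    have hm := h2 i h.1 j (SatW_mem hj) hij
    exact ⟨Finset.mem_image_of_mem g h.1, g j, hm.1, by omega, ih hj⟩

/-- From witnessed satisfaction with all witnesses below `N`, conclude satisfaction with
the valuation capped at `N`. -/
lemma SatW_sat_min {w : ℕ → Set AP} {v : Var → ℕ} {W : Finset ℕ} {N : ℕ}
    (hW : ∀ j ∈ W, j ≤ N) {φ : FX AP Var} :
    ∀ {i : ℕ}, SatW w v W i φ → FX.Sat w i (fun x => min (v x) N) φ := by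
  induction φ with
  | atom a => exact fun h => h.2
  | natom a => exact fun h => h.2
  | and φ ψ ih1 ih2 => exact fun h => ⟨ih1 h.2.1, ih2 h.2.2⟩
  | or φ ψ ih1 ih2 => exact fun h => h.2.elim (fun h' => Or.inl (ih1 h')) (fun h' => Or.inr (ih2 h'))
  | next φ ih => exact fun h => ih h.2
  | ev φ ih =>
    intro i h
    obtain ⟨j, hij, hj⟩ := h.2
    exact ⟨j, hij, ih hj⟩
  | evVar x φ ih =>
    intro i h
    obtain ⟨j, hij, hji, hj⟩ := h.2
    have hjN : j ≤ N := hW j (SatW_mem hj)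
    exact ⟨j, hij, by simp only; omega, ih hj⟩
  | evConst c φ ih =>
    intro i h
    obtain ⟨j, hij, hji, hj⟩ := h.2
    exact ⟨j, hij, hji, ih hj⟩

/-- Satisfaction only depends on a finite prefix of the trace. -/
lemma sat_prefix {w : ℕ → Set AP} {v : Var → ℕ} {φ : FX AP Var} :
    ∀ {i : ℕ}, FX.Sat w i v φ →
      ∃ n, ∀ w' : ℕ → Set AP, (∀ k ≤ n, w' k = w k) → FX.Sat w' i v φ := by
  induction φ with
  | atom a =>
    intro i h
    exact ⟨i, fun w' hw' => by show a ∈ w' i; rw [hw' i le_rfl]; exact h⟩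
  | natom a =>
    intro i h
    exact ⟨i, fun w' hw' => by show a ∉ w' i; rw [hw' i le_rfl]; exact h⟩
  | and φ ψ ih1 ih2 =>
    intro i h
    obtain ⟨n1, h1⟩ := ih1 h.1
    obtain ⟨n2, h2⟩ := ih2 h.2
    exact ⟨max n1 n2, fun w' hw' =>
      ⟨h1 w' (fun k hk => hw' k (hk.trans (le_max_left _ _))),
       h2 w' (fun k hk => hw' k (hk.trans (le_max_right _ _)))⟩⟩
  | or φ ψ ih1 ih2 =>
    intro i h
    rcases h with h | h
    · obtain ⟨n1, h1⟩ := ih1 h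
      exact ⟨n1, fun w' hw' => Or.inl (h1 w' hw')⟩
    · obtain ⟨n2, h2⟩ := ih2 h
      exact ⟨n2, fun w' hw' => Or.inr (h2 w' hw')⟩
  | next φ ih =>
    intro i h
    obtain ⟨n, hn⟩ := ih h
    exact ⟨n, fun w' hw' => hn w' hw'⟩
  | ev φ ih =>
    intro i h
    obtain ⟨j, hij, hj⟩ := h
    obtain ⟨n, hn⟩ := ih hj
    exact ⟨n, fun w' hw' => ⟨j, hij, hn w' hw'⟩⟩
  | evVar x φ ih =>
    intro i h
    obtain ⟨j, hij, hji, hj⟩ := h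
    obtain ⟨n, hn⟩ := ih hj
    exact ⟨n, fun w' hw' => ⟨j, hij, hji, hn w' hw'⟩⟩
  | evConst c φ ih =>
    intro i h
    obtain ⟨j, hij, hji, hj⟩ := h
    obtain ⟨n, hn⟩ := ih hj
    exact ⟨n, fun w' hw' => ⟨j, hij, hji, hn w' hw'⟩⟩

lemma FX.size_pos {φ : FX AP Var} : 1 ≤ φ.size := by
  cases φ <;> simp [FX.size]

end FXAux

namespace FXAux

/-- If all consecutive gaps in `W` are at most `m`, every element is at most `m·(|W|-1)`;
contrapositive: a large element forces a gap of size at least `m+1`. -/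
lemma gap_lemma (m : ℕ) (W : Finset ℕ) (h0 : 0 ∈ W)
    (hbad : ∃ j ∈ W, m * (W.card - 1) < j) :
    ∃ p ∈ W, ∃ q ∈ W, p < q ∧ m + 1 ≤ q - p ∧ ∀ r ∈ W, r ≤ p ∨ q ≤ r := by
  by_contra hcon
  push_neg at hcon
  -- hcon : ∀ p ∈ W, ∀ q ∈ W, p < q → m + 1 ≤ q - p → ∃ r ∈ W, p < r ∧ r < q
  have key : ∀ j, j ∈ W → j ≤ m * ((W.filter (· ≤ j)).card - 1) := by
    intro j
    induction j using Nat.strong_induction_on with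
    | _ j ih =>
      intro hj
      rcases Nat.eq_zero_or_pos j with hj0 | hj0
      · simp [hj0]
      · set T := W.filter (· < j) with hT
        have hT0 : 0 ∈ T := by
          simp [hT, Finset.mem_filter, h0, hj0]
        have hTne : T.Nonempty := ⟨0, hT0⟩
        set p := T.max' hTne with hpdef
        have hpT : p ∈ T := T.max'_mem hTne
        have hpW : p ∈ W := (Finset.mem_filter.mp hpT).1
        have hpj : p < j := by
          have := (Finset.mem_filter.mp hpT).2
          simpa using this
        have hcons : ∀ r ∈ W, r ≤ p ∨ j ≤ r := by
          intro r hr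
          by_cases hrj : r < j
          · exact Or.inl (T.le_max' r (Finset.mem_filter.mpr ⟨hr, by simpa using hrj⟩))
          · exact Or.inr (not_lt.mp hrj)
        have hgap : j - p ≤ m := by
          by_contra hg
          push_neg at hg
          obtain ⟨r, hrW, hpr, hrj⟩ := hcon p hpW j hj hpj (by omega)
          rcases hcons r hrW with h | h <;> omega
        have hihp := ih p hpj hpW
        set cp := (W.filter (· ≤ p)).card with hcp
        set cj := (W.filter (· ≤ j)).card with hcj
        have hcp1 : 1 ≤ cp := Finset.card_pos.mpr ⟨p, Finset.mem_filter.mpr ⟨hpW, le_rfl⟩⟩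
        have hss : W.filter (· ≤ p) ⊂ W.filter (· ≤ j) := by
          constructor
          · intro r hr
            have := Finset.mem_filter.mp hr
            exact Finset.mem_filter.mpr ⟨this.1, by
              have : r ≤ p := by simpa using this.2
              simp; omega⟩
          · intro hsub
            have := hsub (Finset.mem_filter.mpr ⟨hj, by simp⟩)
            have := Finset.mem_filter.mp this
            have : j ≤ p := this.2
            omega
        have hlt : cp < cj := by rw [hcp, hcj]; exact Finset.card_lt_card hss
        have heq : m * cp = m * (cp - 1) + m := by
          conv_lhs => rw [← Nat.sub_add_cancel hcp1]
          rw [Nat.mul_add, Nat.mul_one]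
        have hmono : m * cp ≤ m * (cj - 1) := Nat.mul_le_mul_left m (by omega)
        omega
  obtain ⟨j, hjW, hjbig⟩ := hbad
  have := key j hjW
  have hfle : (W.filter (· ≤ j)).card ≤ W.card := Finset.card_le_card (Finset.filter_subset _ _)
  have : m * ((W.filter (· ≤ j)).card - 1) ≤ m * (W.card - 1) :=
    Nat.mul_le_mul_left m (by omega)
  omega

end FXAux

namespace FXAux

/-- Reindexing map cutting out the segment `(a, a+l]`. -/
def cutMap (a l : ℕ) : ℕ → ℕ := fun j => if j ≤ a then j else j - l

/-- Path with the segment `(a, a+l]` cut out. -/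
def cutPath {S : Type} (u : ℕ → S) (a l : ℕ) : ℕ → S :=
  fun k => if k ≤ a then u k else u (k + l)

lemma cutMap_le {a l j : ℕ} (h : j ≤ a) : cutMap a l j = j := by
  unfold cutMap; exact if_pos h

lemma cutMap_gt {a l j : ℕ} (h : ¬ j ≤ a) : cutMap a l j = j - l := by
  unfold cutMap; exact if_neg h

lemma cutPath_le {S : Type} (u : ℕ → S) {a l k : ℕ} (h : k ≤ a) : cutPath u a l k = u k := by
  unfold cutPath; exact if_pos h

lemma cutPath_gt {S : Type} (u : ℕ → S) {a l k : ℕ} (h : ¬ k ≤ a) :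
    cutPath u a l k = u (k + l) := by
  unfold cutPath; exact if_neg h

lemma iter {AP Var S : Type} [Fintype S] (P : S → S → ℝ≥0∞) (L : S → Set AP)
    (v : Var → ℕ) (φ : FX AP Var) :
    ∀ (n : ℕ) (W : Finset ℕ) (u : ℕ → S), W.sup id ≤ n →
      (∀ k, P (u k) (u (k + 1)) ≠ 0) →
      SatW (fun t => L (u t)) v W 0 φ →
      ∃ (u' : ℕ → S) (W' : Finset ℕ),
        (∀ k, P (u' k) (u' (k + 1)) ≠ 0) ∧ u' 0 = u 0 ∧
        SatW (fun t => L (u' t)) v W' 0 φ ∧ W'.card ≤ W.card ∧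
        ∀ j ∈ W', j ≤ Fintype.card S * (W'.card - 1) := by
  intro n
  induction n using Nat.strong_induction_on with
  | _ n ih =>
    intro W u hsup hu hsat
    by_cases hgood : ∀ j ∈ W, j ≤ Fintype.card S * (W.card - 1)
    · exact ⟨u, W, hu, rfl, hsat, le_rfl, hgood⟩
    · push_neg at hgood
      have h0W : 0 ∈ W := SatW_mem hsat
      have hgood' : ∃ j ∈ W, Fintype.card S * (W.card - 1) < j := hgood
      obtain ⟨p, hpW, q, hqW, hpq, hgap, hcons⟩ :=
        gap_lemma (Fintype.card S) W h0W hgood'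
      set m := Fintype.card S with hm
      have hm1 : 1 ≤ m := Fintype.card_pos_iff.mpr ⟨u 0⟩
      have hq : p + m + 1 ≤ q := by omega
      obtain ⟨a, b, hab, hpa, hbm, huab⟩ :
          ∃ a b, a < b ∧ p ≤ a ∧ b ≤ p + m ∧ u a = u b := by
        obtain ⟨x, y, hxy, hux⟩ := Fintype.exists_ne_map_eq_of_card_lt
          (fun k : Fin (m + 1) => u (p + (k : ℕ))) (by simp; omega)
        rcases lt_or_gt_of_ne hxy with h | h
        · have hxy' : (x : ℕ) < (y : ℕ) := h
          have hy : (y : ℕ) ≤ m := by omega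
          exact ⟨p + (x : ℕ), p + (y : ℕ), by omega, Nat.le_add_right _ _, by omega, hux⟩
        · have hxy' : (y : ℕ) < (x : ℕ) := h
          have hx : (x : ℕ) ≤ m := by omega
          exact ⟨p + (y : ℕ), p + (x : ℕ), by omega, Nat.le_add_right _ _, by omega, hux.symm⟩
      set l := b - a with hl
      have hl1 : 1 ≤ l := by omega
      have hbq : b < q := by omega
      have hab' : a + l = b := by omega
      -- behaviour of cutMap on W
      have gval : ∀ j ∈ W, (j ≤ p ∧ cutMap a l j = j) ∨
          (q ≤ j ∧ cutMap a l j = j - l ∧ a + 1 ≤ cutMap a l j) := by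
        intro j hj
        rcases hcons j hj with h | h
        · exact Or.inl ⟨h, cutMap_le (by omega)⟩
        · have he : cutMap a l j = j - l := cutMap_gt (by omega)
          exact Or.inr ⟨h, he, by omega⟩
      have h1 : ∀ j ∈ W, L (cutPath u a l (cutMap a l j)) = L (u j) := by
        intro j hj
        rcases gval j hj with ⟨hjp, he⟩ | ⟨hjq, he, hge⟩
        · rw [he, cutPath_le u (show j ≤ a by omega)]
        · rw [he, cutPath_gt u (show ¬ j - l ≤ a by omega),
            show j - l + l = j by omega]
      have h2 : ∀ p' ∈ W, ∀ q' ∈ W, p' ≤ q' →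
          cutMap a l p' ≤ cutMap a l q' ∧
          cutMap a l q' ≤ cutMap a l p' + (q' - p') := by
        intro p' hp' q' hq' hle
        rcases gval p' hp' with ⟨h1', e1⟩ | ⟨h1', e1, g1⟩ <;>
          rcases gval q' hq' with ⟨h2', e2⟩ | ⟨h2', e2, g2⟩ <;> omega
      have h3 : ∀ i, i ∈ W → (i + 1) ∈ W →
          cutMap a l (i + 1) = cutMap a l i + 1 := by
        intro i hi hi1
        rcases gval i hi with ⟨h1', e1⟩ | ⟨h1', e1, g1⟩ <;>
          rcases gval (i + 1) hi1 with ⟨h2', e2⟩ | ⟨h2', e2, g2⟩ <;> omega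
      -- validity of the cut path
      have valid1 : ∀ k, P (cutPath u a l k) (cutPath u a l (k + 1)) ≠ 0 := by
        intro k
        rcases lt_trichotomy k a with h | h | h
        · have e1 : cutPath u a l k = u k := cutPath_le u (le_of_lt h)
          have e2 : cutPath u a l (k + 1) = u (k + 1) := cutPath_le u (by omega)
          rw [e1, e2]; exact hu k
        · have e1 : cutPath u a l k = u k := cutPath_le u (le_of_eq h)
          have e2 : cutPath u a l (k + 1) = u (k + 1 + l) := cutPath_gt u (by omega)
          have e3 : k + 1 + l = b + 1 := by omega
          rw [e1, e2, e3, h, huab]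
          exact hu b
        · have e1 : cutPath u a l k = u (k + l) := cutPath_gt u (by omega)
          have e2 : cutPath u a l (k + 1) = u (k + 1 + l) := cutPath_gt u (by omega)
          have e3 : k + 1 + l = (k + l) + 1 := by omega
          rw [e1, e2, e3]
          exact hu (k + l)
      have hg0 : cutMap a l 0 = 0 := cutMap_le (Nat.zero_le a)
      have hsat1 : SatW (fun t => L (cutPath u a l t)) v (W.image (cutMap a l)) 0 φ := by
        have := SatW_shift (w := fun t => L (u t)) (w' := fun t => L (cutPath u a l t))
          (cutMap a l) h1 h2 h3 hsat
        rwa [hg0] at this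
      -- the sup strictly decreases
      have hsupq : q ≤ W.sup id := Finset.le_sup (f := id) hqW
      have hn1 : 1 ≤ n := by omega
      have hsup1 : (W.image (cutMap a l)).sup id ≤ n - 1 := by
        have hlt : ∀ j ∈ W, id (cutMap a l j) < W.sup id := by
          intro j hj
          rcases gval j hj with ⟨hjp, he⟩ | ⟨hjq, he, hge⟩
          · have : j ≤ W.sup id := Finset.le_sup (f := id) hj
            simp only [id, he]; omega
          · have : j ≤ W.sup id := Finset.le_sup (f := id) hj
            simp only [id, he]; omega
        have : (W.image (cutMap a l)).sup id < W.sup id := by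
          apply Finset.sup_lt_iff (show (⊥ : ℕ) < W.sup id from by
            have : (⊥ : ℕ) = 0 := rfl
            omega) |>.mpr
          intro b' hb'
          obtain ⟨j, hjW, rfl⟩ := Finset.mem_image.mp hb'
          exact hlt j hjW
        omega
      obtain ⟨u', W', hv', h0', hsat', hcard', hbound'⟩ :=
        ih (n - 1) (by omega) (W.image (cutMap a l)) (cutPath u a l) hsup1 valid1 hsat1
      refine ⟨u', W', hv', ?_, hsat', hcard'.trans Finset.card_image_le, hbound'⟩
      rw [h0']
      exact cutPath_le u (Nat.zero_le a)

end FXAux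

namespace FXAux

/-- Key lemma: if `v(φ)` holds with positive probability, then so does the valuation
capped pointwise at `N = |S|·|φ|`. -/
lemma key {AP Var S : Type} [Fintype S] [DecidableEq S] [MeasurableSpace S]
    (P : S → S → ℝ≥0∞) (hP : ∀ s, ∑ t, P s t = 1)
    (s₀ : S) (L : S → Set AP)
    (μ : Measure (ℕ → S))
    (hcyl : ∀ (n : ℕ) (u : ℕ → S),
      μ {π | ∀ k ≤ n, π k = u k} =
        (if u 0 = s₀ then 1 else 0) * ∏ k ∈ Finset.range n, P (u k) (u (k + 1)))
    (φ : FX AP Var) (v : Var → ℕ) (hS : Nonempty S)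
    (hv : 0 < μ {π | FX.Sat (fun i => L (π i)) 0 v φ}) :
    0 < μ {π | FX.Sat (fun i => L (π i)) 0
      (fun x => min (v x) (Fintype.card S * φ.size)) φ} := by
  classical
  obtain ⟨s⟩ := hS
  -- every state has a successor with nonzero transition probability
  have hsucc : ∀ t : S, ∃ t', P t t' ≠ 0 := by
    intro t
    by_contra h
    push_neg at h
    have := hP t
    simp [h] at this
  choose sc hsc using hsucc
  -- countable covering of the satisfaction event by "good" cylinders
  set ext : (Σ n : ℕ, (Fin (n + 1) → S)) → ℕ → S :=
    fun i k => if h : k < i.1 + 1 then i.2 ⟨k, h⟩ else s with hext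
  set B : (Σ n : ℕ, (Fin (n + 1) → S)) → Set (ℕ → S) :=
    fun i => {π | (∀ k ≤ i.1, π k = ext i k) ∧
      ∀ π' : ℕ → S, (∀ k ≤ i.1, π' k = ext i k) →
        FX.Sat (fun t => L (π' t)) 0 v φ} with hB
  have hcover : {π | FX.Sat (fun i => L (π i)) 0 v φ} ⊆ ⋃ i, B i := by
    intro π hπ
    obtain ⟨n, hn⟩ := sat_prefix hπ
    refine Set.mem_iUnion.mpr ⟨⟨n, fun k => π (k : ℕ)⟩, ?_, ?_⟩
    · intro k hk
      replace hk : k ≤ n := hk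
      simp only [hext]
      rw [dif_pos (by omega : k < n + 1)]
    · intro π' hπ'
      apply hn
      intro k hk
      have h2 := hπ' k hk
      simp only [hext] at h2
      rw [dif_pos (by omega : k < n + 1)] at h2
      rw [h2]
  have hex : ∃ i, μ (B i) ≠ 0 := by
    by_contra h
    push_neg at h
    have hle : μ {π | FX.Sat (fun i => L (π i)) 0 v φ} ≤ ∑' i, μ (B i) :=
      (measure_mono hcover).trans (measure_iUnion_le _)
    rw [ENNReal.tsum_eq_zero.mpr h] at hle
    exact absurd (le_antisymm hle (zero_le)) (ne_of_gt hv)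
  obtain ⟨i, hi⟩ := hex
  have hGood : ∀ π' : ℕ → S, (∀ k ≤ i.1, π' k = ext i k) →
      FX.Sat (fun t => L (π' t)) 0 v φ := by
    by_contra h
    apply hi
    have : B i = ∅ := by
      rw [hB]
      ext π
      simp only [Set.mem_setOf_eq, Set.mem_empty_iff_false, iff_false]
      intro hmem
      exact h hmem.2
    rw [this, measure_empty]
  have hcylpos : μ {π | ∀ k ≤ i.1, π k = ext i k} ≠ 0 := by
    intro h0
    apply hi
    have hsub : B i ⊆ {π | ∀ k ≤ i.1, π k = ext i k} := fun π hπ => hπ.1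
    exact le_antisymm (h0 ▸ measure_mono hsub) (zero_le)
  rw [hcyl i.1 (ext i)] at hcylpos
  have h0 : ext i 0 = s₀ := by
    by_contra h
    rw [if_neg h, zero_mul] at hcylpos
    exact hcylpos rfl
  have htr : ∀ k < i.1, P (ext i k) (ext i (k + 1)) ≠ 0 := by
    intro k hk
    intro hzero
    apply hcylpos
    rw [Finset.prod_eq_zero (Finset.mem_range.mpr hk) hzero, mul_zero]
  -- extend the positive-probability prefix to an infinite valid path
  set n := i.1 with hn
  set u : ℕ → S := fun k => if k ≤ n then ext i k else sc^[k - n] (ext i n) with hudef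
  have hueq : ∀ k ≤ n, u k = ext i k := by
    intro k hk
    simp only [hudef]
    rw [if_pos hk]
  have hu2 : ∀ k, n ≤ k → u k = sc^[k - n] (ext i n) := by
    intro k hk
    rcases eq_or_lt_of_le hk with h | h
    · simp only [hudef]
      rw [if_pos h.symm.le, ← h]
      simp
    · simp only [hudef]
      rw [if_neg (by omega)]
  have valid : ∀ k, P (u k) (u (k + 1)) ≠ 0 := by
    intro k
    rcases lt_or_ge k n with h | h
    · rw [hueq k h.le, hueq (k + 1) (by omega)]
      exact htr k h
    · rw [hu2 k h, hu2 (k + 1) (by omega),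
        show k + 1 - n = (k - n) + 1 by omega, Function.iterate_succ_apply']
      exact hsc _
  have hsat : FX.Sat (fun t => L (u t)) 0 v φ := hGood u hueq
  -- pump
  obtain ⟨W, hW, hWcard⟩ := sat_extract hsat
  obtain ⟨u', W', valid', h0', hsat', hcard', hbound'⟩ :=
    iter P L v φ (W.sup id) W u le_rfl valid hW
  have hbN : ∀ j ∈ W', j ≤ Fintype.card S * φ.size := by
    intro j hj
    have := hbound' j hj
    have hle : W'.card - 1 ≤ φ.size := by
      have := hcard'.trans hWcard
      omega
    exact this.trans (Nat.mul_le_mul_left _ hle)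
  have hsatmin : FX.Sat (fun t => L (u' t)) 0
      (fun x => min (v x) (Fintype.card S * φ.size)) φ :=
    SatW_sat_min hbN hsat'
  -- back to positive measure
  obtain ⟨n', hn'⟩ := sat_prefix hsatmin
  have hsub : {π : ℕ → S | ∀ k ≤ n', π k = u' k} ⊆
      {π | FX.Sat (fun i => L (π i)) 0
        (fun x => min (v x) (Fintype.card S * φ.size)) φ} := by
    intro π hπ
    apply hn'
    intro k hk
    rw [hπ k hk]
  have hu'0 : u' 0 = s₀ := by
    rw [h0', hueq 0 (Nat.zero_le n), h0]
  have hpos : μ {π : ℕ → S | ∀ k ≤ n', π k = u' k} ≠ 0 := by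
    rw [hcyl n' u', if_pos hu'0, one_mul]
    rw [Finset.prod_ne_zero_iff]
    intro k _
    exact valid' k
  calc (0 : ℝ≥0∞) < μ {π : ℕ → S | ∀ k ≤ n', π k = u' k} := pos_iff_ne_zero.mpr hpos
    _ ≤ _ := measure_mono hsub

end FXAux

/-- For a pLTL(F,X) formula `φ` over `d ≥ 1` parameter variables and a finite Markov chain
`M` with `m` states, with `N = m·|φ|`: the set of minimal elements of `V_{>0}(φ)` (w.r.t.
the pointwise order) is an antichain contained in the box `{0,…,N}^d`, is finite, and has
cardinality at most `(N·d)^{d-1}`. -/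
theorem FX_min_Vpos_antichain_card
    {AP Var S : Type} [Fintype Var] [Nonempty Var]
    [Fintype S] [DecidableEq S] [MeasurableSpace S]
    (P : S → S → ℝ≥0∞) (hP : ∀ s, ∑ t, P s t = 1)
    (s₀ : S) (L : S → Set AP)
    (μ : Measure (ℕ → S)) (hprob : IsProbabilityMeasure μ)
    (hcyl : ∀ (n : ℕ) (u : ℕ → S),
      μ {π | ∀ k ≤ n, π k = u k} =
        (if u 0 = s₀ then 1 else 0) * ∏ k ∈ Finset.range n, P (u k) (u (k + 1)))
    (φ : FX AP Var)
    (V : Set (Var → ℕ))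
    (hV : V = {v | 0 < μ {π | FX.Sat (fun i => L (π i)) 0 v φ}})
    (minV : Set (Var → ℕ))
    (hminV : minV = {v ∈ V | ∀ v' ∈ V, v' ≤ v → v' = v})
    (N d : ℕ) (hN : N = Fintype.card S * φ.size) (hd : d = Fintype.card Var) :
    IsAntichain (· ≤ ·) minV ∧
    (∀ v ∈ minV, ∀ x : Var, v x ≤ N) ∧
    minV.Finite ∧
    Nat.card minV ≤ (N * d) ^ (d - 1) := by
  classical
  -- the state space is nonempty
  have hS : Nonempty S := by
    by_contra hne
    rw [not_nonempty_iff] at hne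
    haveI : IsEmpty (ℕ → S) := ⟨fun f => hne.false (f 0)⟩
    have h1 : (Set.univ : Set (ℕ → S)) = ∅ := Set.univ_eq_empty_iff.mpr this
    have h2 := hprob.measure_univ
    rw [h1, measure_empty] at h2
    exact one_ne_zero h2.symm
  -- capping a positive-probability valuation at N keeps the probability positive
  have key' : ∀ v, v ∈ V → (fun x => min (v x) N) ∈ V := by
    intro v hv
    rw [hV] at hv ⊢
    simp only [Set.mem_setOf_eq] at hv ⊢
    have := FXAux.key P hP s₀ L μ hcyl φ v hS hv
    rw [hN]
    exact this
  -- antichain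
  have hanti : IsAntichain (· ≤ ·) minV := by
    intro a ha b hb hab hle
    rw [hminV] at ha hb
    exact hab (hb.2 a ha.1 hle)
  -- the box bound
  have hbox : ∀ v ∈ minV, ∀ x : Var, v x ≤ N := by
    intro v hv x
    rw [hminV] at hv
    have hcap := key' v hv.1
    have hle : (fun x => min (v x) N) ≤ v := fun y => min_le_left _ _
    have heq := hv.2 _ hcap hle
    have := congrFun heq x
    omega
  -- finiteness
  have hfin : minV.Finite := by
    apply Set.Finite.subset (Set.Finite.pi (fun _ : Var => Set.finite_Iic N))
    intro v hv
    rw [Set.mem_pi]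
    intro x _
    exact hbox v hv x
  refine ⟨hanti, hbox, hfin, ?_⟩
  -- cardinality bound
  haveI : Finite minV := hfin.to_subtype
  have hd1 : 1 ≤ d := by
    rw [hd]
    exact Fintype.card_pos_iff.mpr ‹Nonempty Var›
  let x₀ : Var := Classical.arbitrary Var
  let f : minV → ({y : Var // y ≠ x₀} → Fin (N + 1)) :=
    fun v y => ⟨v.1 y.1, Nat.lt_succ_of_le (hbox v.1 v.2 y.1)⟩
  have hinj : Function.Injective f := by
    rintro ⟨v, hv⟩ ⟨v', hv'⟩ h
    have hag : ∀ y : Var, y ≠ x₀ → v y = v' y := by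
      intro y hy
      exact congrArg Fin.val (congrFun h ⟨y, hy⟩)
    apply Subtype.ext
    rcases le_total (v x₀) (v' x₀) with hc | hc
    · have hle : v ≤ v' := by
        intro y
        by_cases hy : y = x₀
        · subst hy; exact hc
        · rw [hag y hy]
      rw [hminV] at hv hv'
      exact hv'.2 v hv.1 hle
    · have hle : v' ≤ v := by
        intro y
        by_cases hy : y = x₀
        · subst hy; exact hc
        · rw [hag y hy]
      rw [hminV] at hv hv'
      exact (hv.2 v' hv'.1 hle).symm
  have hle1 : Nat.card minV ≤ Nat.card ({y : Var // y ≠ x₀} → Fin (N + 1)) :=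
    Nat.card_le_card_of_injective f hinj
  have hcard2 : Nat.card ({y : Var // y ≠ x₀} → Fin (N + 1)) = (N + 1) ^ (d - 1) := by
    rw [Nat.card_eq_fintype_card, Fintype.card_fun, Fintype.card_fin]
    congr 1
    rw [hd]
    rw [Fintype.card_subtype_compl, Fintype.card_subtype_eq]
  have hN1 : 1 ≤ N := by
    rw [hN]
    have h1 : 1 ≤ Fintype.card S := Fintype.card_pos_iff.mpr hS
    have h2 : 1 ≤ φ.size := FXAux.FX.size_pos
    exact Nat.one_le_iff_ne_zero.mpr (Nat.mul_ne_zero (by omega) (by omega))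
  have hfinal : (N + 1) ^ (d - 1) ≤ (N * d) ^ (d - 1) := by
    rcases eq_or_lt_of_le hd1 with h | h
    · rw [← h]
      simp
    · apply Nat.pow_le_pow_left
      have : N * 2 ≤ N * d := Nat.mul_le_mul_left N (by omega)
      omega
  omega
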